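/- For every integer n ≥ 1 let N_n be the Λ₁-module with k-basis t_1,…,t_{n+1}, s_1,…,s_{n+1} and action α(t_j) = s_j for 1 ≤ j ≤ n+1, δ(t_j) = s_{j+1} for 1 ≤ j ≤ n, δ(t_{n+1}) = 0, and α(s_j) = δ(s_j) = 0 for all j (this is the string module M((αδ^{−1})^n α)). Then the map f defined by f(t_1) = t_{n+1}, f(s_1) = s_{n+1} and f = 0 on all other basis vectors is a Λ₁-module endomorphism of N_n, and for every c ∈ k the endomorphism f − c·id does not factor through a projective Λ₁-module. In particular the stable endomorphism ring of N_n is not isomorphic to k. -/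

import Mathlib

/-! Common framework: modules over the generalized Brauer star algebra with one
edge, `Λ₁ = k⟨α,δ⟩/(αδ, δα, α² − δ²)`, encoded as a module `V` together with two
endomorphisms `A` (the action of `α`) and `D` (the action of `δ`). -/

namespace GBTAone

structure Mod1 (R : Type) [CommRing R] : Type 1 where
  V : Type
  [instAdd : AddCommGroup V]
  [instMod : Module R V]
  A : Module.End R V
  D : Module.End R V

attribute [instance] Mod1.instAdd Mod1.instMod

variable {R : Type} [CommRing R]

/-- The defining relations of `Λ₁`: `αδ = δα = 0` and `α² = δ²`. -/
def Satisfies1 (ρ : Mod1 R) : Prop :=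
  ρ.A * ρ.D = 0 ∧ ρ.D * ρ.A = 0 ∧ ρ.A * ρ.A = ρ.D * ρ.D

/-- The space of `Λ₁`-module homomorphisms `ρ → σ`. -/
def homSet1 (ρ σ : Mod1 R) : Submodule R (ρ.V →ₗ[R] σ.V) where
  carrier := {f | f ∘ₗ ρ.A = σ.A ∘ₗ f ∧ f ∘ₗ ρ.D = σ.D ∘ₗ f}
  add_mem' := by
    rintro f g ⟨hfa, hfd⟩ ⟨hga, hgd⟩
    exact ⟨by simp only [LinearMap.add_comp, LinearMap.comp_add, hfa, hga],
      by simp only [LinearMap.add_comp, LinearMap.comp_add, hfd, hgd]⟩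
  zero_mem' := ⟨by simp, by simp⟩
  smul_mem' := by
    rintro c f ⟨hfa, hfd⟩
    exact ⟨by simp only [LinearMap.smul_comp, LinearMap.comp_smul, hfa],
      by simp only [LinearMap.smul_comp, LinearMap.comp_smul, hfd]⟩

/-- Projectivity of a `Λ₁`-module, via the lifting property in the category of
`Λ₁`-modules. -/
def IsProjective1 (P : Mod1 R) : Prop :=
  Satisfies1 P ∧
  ∀ (A B : Mod1 R), Satisfies1 A → Satisfies1 B →
    ∀ p ∈ homSet1 A B, Function.Surjective p →
      ∀ g ∈ homSet1 P B, ∃ h ∈ homSet1 P A, p ∘ₗ h = g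

/-- An endomorphism `f` of `ρ` factors through a projective `Λ₁`-module. -/
def FactorsThroughProjective1 (ρ : Mod1 R) (f : ρ.V →ₗ[R] ρ.V) : Prop :=
  ∃ P : Mod1 R, IsProjective1 P ∧ ∃ g ∈ homSet1 ρ P, ∃ h ∈ homSet1 P ρ, f = h ∘ₗ g

/-- "The stable endomorphism ring of `ρ` is isomorphic to the scalars". -/
def StableEndIsoScalars1 (ρ : Mod1 R) : Prop :=
  (¬ FactorsThroughProjective1 ρ LinearMap.id) ∧
  ∀ f ∈ homSet1 ρ ρ, ∃ c : R, FactorsThroughProjective1 ρ (f - c • LinearMap.id)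

/-- The linear map on `Fin m → W` sending the `src` coordinate to the `dst`
coordinate through `g`, and killing all other coordinates. -/
def mk1 {m : ℕ} {W : Type} [AddCommGroup W] [Module R W] (src dst : Fin m)
    (g : W →ₗ[R] W) : (Fin m → W) →ₗ[R] (Fin m → W) where
  toFun x := fun r => if r = dst then g (x src) else 0
  map_add' x y := by funext r; by_cases h : r = dst <;> simp [h]
  map_smul' c x := by funext r; by_cases h : r = dst <;> simp [h]

/-- The map `(x, y) ↦ (0, x)` on `W × W`. -/
def sh (R W : Type) [CommRing R] [AddCommGroup W] [Module R W] :
    (W × W) →ₗ[R] (W × W) :=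
  LinearMap.prod 0 (LinearMap.fst R W W)

/-- The module `M(α)`: `k²` with `α(x,y) = (0,x)` and `δ = 0`. -/
@[reducible] def Malpha (k : Type) [CommRing k] : Mod1 k where
  V := k × k
  A := sh k k
  D := 0

/-- The module `M(δ)`: `k²` with `δ(x,y) = (0,x)` and `α = 0`. -/
@[reducible] def Mdelta (k : Type) [CommRing k] : Mod1 k where
  V := k × k
  A := 0
  D := sh k k

/-- The regular module `Λ₁`, with basis `1, α, δ, α²` (coordinates `0,1,2,3`). -/
@[reducible] def reg (k : Type) [CommRing k] : Mod1 k where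
  V := Fin 4 → k
  A := mk1 0 1 LinearMap.id + mk1 1 3 LinearMap.id
  D := mk1 0 2 LinearMap.id + mk1 2 3 LinearMap.id

/-- The simple `Λ₁`-module `S₁`. -/
@[reducible] def S1 (k : Type) [CommRing k] : Mod1 k where
  V := k
  A := 0
  D := 0


/-- The shift `x ↦ (0, x_0, x_1, …, x_{n-1})` on `Fin (n+1) → k`. -/
def shiftDown (k : Type) [CommRing k] (n : ℕ) :
    (Fin (n + 1) → k) →ₗ[k] (Fin (n + 1) → k) where
  toFun x := fun i =>
    if h : i.val = 0 then 0
    else x ⟨i.val - 1, lt_of_le_of_lt (Nat.sub_le _ _) i.isLt⟩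
  map_add' x y := by funext i; by_cases h : i = 0 <;> simp [h]
  map_smul' c x := by funext i; by_cases h : i = 0 <;> simp [h]

/-- The string module `N_n = M((αδ⁻¹)ⁿα)`, with basis `t_1, …, t_{n+1}`
(first factor) and `s_1, …, s_{n+1}` (second factor); `α(t_j) = s_j`,
`δ(t_j) = s_{j+1}` (`j ≤ n`), `δ(t_{n+1}) = 0`, `α(s_j) = δ(s_j) = 0`. -/
@[reducible] def Nmod (k : Type) [CommRing k] (n : ℕ) : Mod1 k where
  V := (Fin (n + 1) → k) × (Fin (n + 1) → k)
  A := LinearMap.prod 0 (LinearMap.fst k _ _)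
  D := LinearMap.prod 0 (shiftDown k n ∘ₗ LinearMap.fst k _ _)

/-- The endomorphism `f` of `N_n`: `t_1 ↦ t_{n+1}`, `s_1 ↦ s_{n+1}`, all other
basis vectors to `0`. -/
def f7 (k : Type) [CommRing k] (n : ℕ) :
    ((Fin (n + 1) → k) × (Fin (n + 1) → k)) →ₗ[k]
      ((Fin (n + 1) → k) × (Fin (n + 1) → k)) :=
  LinearMap.prodMap (mk1 0 ⟨n, Nat.lt_succ_self n⟩ LinearMap.id)
    (mk1 0 ⟨n, Nat.lt_succ_self n⟩ LinearMap.id)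


/-! Auxiliary lemmas for the proof. -/

lemma mk1_apply {m : ℕ} {W : Type} [AddCommGroup W] [Module R W] (src dst : Fin m)
    (g : W →ₗ[R] W) (x : Fin m → W) (r : Fin m) :
    mk1 src dst g x r = if r = dst then g (x src) else 0 := rfl

lemma reg_A_apply (c : Fin 4 → R) (r : Fin 4) :
    (reg R).A c r = (if r = 1 then c 0 else 0) + (if r = 3 then c 1 else 0) := rfl

lemma reg_D_apply (c : Fin 4 → R) (r : Fin 4) :
    (reg R).D c r = (if r = 2 then c 0 else 0) + (if r = 3 then c 2 else 0) := rfl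

lemma reg_sat : Satisfies1 (reg R) := by
  refine ⟨?_, ?_, ?_⟩ <;>
  · apply LinearMap.ext
    intro c
    funext r
    fin_cases r <;>
      simp [Module.End.mul_apply, mk1_apply] <;> rfl

/-- free module on `ι` -/
@[reducible] noncomputable def freeOn (ι : Type) : Mod1 R where
  V := ι →₀ (Fin 4 → R)
  A := Finsupp.mapRange.linearMap (reg R).A
  D := Finsupp.mapRange.linearMap (reg R).D

lemma mapRange_mul (ι : Type) (f g : (Fin 4 → R) →ₗ[R] (Fin 4 → R)) :
    (Finsupp.mapRange.linearMap (α := ι) f) * (Finsupp.mapRange.linearMap g)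
      = Finsupp.mapRange.linearMap (f * g) := by
  rw [Module.End.mul_eq_comp, Module.End.mul_eq_comp, Finsupp.mapRange.linearMap_comp]

lemma mapRange_zero' (ι : Type) :
    (Finsupp.mapRange.linearMap (α := ι) (0 : (Fin 4 → R) →ₗ[R] (Fin 4 → R))) = 0 := by
  apply Finsupp.lhom_ext
  intro a b
  simp

lemma satisfies_freeOn (ι : Type) : Satisfies1 (freeOn (R := R) ι) := by
  obtain ⟨h1, h2, h3⟩ := reg_sat (R := R)
  refine ⟨?_, ?_, ?_⟩
  · show (Finsupp.mapRange.linearMap (α := ι) (reg R).A) * _ = 0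
    rw [mapRange_mul, h1, mapRange_zero']
  · show (Finsupp.mapRange.linearMap (α := ι) (reg R).D) * _ = 0
    rw [mapRange_mul, h2, mapRange_zero']
  · show (Finsupp.mapRange.linearMap (α := ι) (reg R).A) * _ = _
    rw [mapRange_mul, mapRange_mul, h3]

noncomputable def theta (P : Mod1 R) (x : P.V) : (Fin 4 → R) →ₗ[R] P.V where
  toFun c := c 0 • x + c 1 • P.A x + c 2 • P.D x + c 3 • P.A (P.A x)
  map_add' a b := by simp only [Pi.add_apply, add_smul]; abel
  map_smul' a b := by simp [mul_smul, smul_add]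

noncomputable def pmap (P : Mod1 R) : (P.V →₀ (Fin 4 → R)) →ₗ[R] P.V :=
  Finsupp.lsum ℕ (theta P)

lemma theta_apply (P : Mod1 R) (x : P.V) (c : Fin 4 → R) :
    theta P x c = c 0 • x + c 1 • P.A x + c 2 • P.D x + c 3 • P.A (P.A x) := rfl

lemma pmap_mem (P : Mod1 R) (hS : Satisfies1 P) :
    pmap P ∈ homSet1 (freeOn P.V) P := by
  have hAD : ∀ x : P.V, P.A (P.D x) = 0 := fun x => by
    have := LinearMap.ext_iff.1 hS.1 x; simpa [Module.End.mul_apply] using this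
  have hDA : ∀ x : P.V, P.D (P.A x) = 0 := fun x => by
    have := LinearMap.ext_iff.1 hS.2.1 x; simpa [Module.End.mul_apply] using this
  have hAAA : P.A * P.A * P.A = 0 := by
    rw [mul_assoc, hS.2.2, ← mul_assoc, hS.1, zero_mul]
  have hA3 : ∀ x : P.V, P.A (P.A (P.A x)) = 0 := fun x => by
    have := LinearMap.ext_iff.1 hAAA x; simpa [Module.End.mul_apply] using this
  have hDD : ∀ x : P.V, P.D (P.D x) = P.A (P.A x) := fun x => by
    have := LinearMap.ext_iff.1 hS.2.2 x; simpa [Module.End.mul_apply] using this.symm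
  have hDAA : P.D * (P.A * P.A) = 0 := by rw [← mul_assoc, hS.2.1, zero_mul]
  have hD3 : ∀ x : P.V, P.D (P.A (P.A x)) = 0 := fun x => by
    have := LinearMap.ext_iff.1 hDAA x; simpa [Module.End.mul_apply] using this
  constructor <;>
  · apply Finsupp.lhom_ext
    intro x c
    simp only [LinearMap.comp_apply, Finsupp.mapRange.linearMap_apply,
      Finsupp.mapRange_single, pmap, Finsupp.lsum_single, theta_apply,
      map_add, map_smul, reg_A_apply, reg_D_apply]
    simp [hAD, hDA, hA3, hD3, hDD, mk1_apply]

lemma pmap_surj (P : Mod1 R) : Function.Surjective (pmap P) := by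
  intro y
  refine ⟨Finsupp.single y (Pi.single 0 1), ?_⟩
  simp [pmap, theta_apply, Pi.single_apply]

lemma proj_socle {P : Mod1 R} (hP : IsProjective1 P) {y : P.V}
    (hA : P.A y = 0) (hD : P.D y = 0) : ∃ z, P.A (P.A z) = y := by
  obtain ⟨h, hhmem, hsec⟩ := hP.2 (freeOn P.V) P (satisfies_freeOn _) hP.1
    (pmap P) (pmap_mem P hP.1) (pmap_surj P) LinearMap.id ⟨by simp, by simp⟩
  set φ : P.V →₀ (Fin 4 → R) := h y with hφ
  have hAφ : Finsupp.mapRange.linearMap (reg R).A φ = 0 := by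
    have := congrFun (congrArg DFunLike.coe hhmem.1) y
    simp only [LinearMap.comp_apply, hA, map_zero] at this
    exact this.symm
  have hDφ : Finsupp.mapRange.linearMap (reg R).D φ = 0 := by
    have := congrFun (congrArg DFunLike.coe hhmem.2) y
    simp only [LinearMap.comp_apply, hD, map_zero] at this
    exact this.symm
  have hc : ∀ x, (φ x) 0 = 0 ∧ (φ x) 1 = 0 ∧ (φ x) 2 = 0 := by
    intro x
    have h1 := congrFun (DFunLike.congr_fun hAφ x) 1
    have h2 := congrFun (DFunLike.congr_fun hAφ x) 3
    have h3 := congrFun (DFunLike.congr_fun hDφ x) 3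
    simp only [Finsupp.mapRange.linearMap_apply, Finsupp.mapRange_apply,
      reg_A_apply, reg_D_apply, Finsupp.coe_zero, Pi.zero_apply] at h1 h2 h3
    simp [mk1_apply] at h1 h2 h3
    exact ⟨h1, h2, h3⟩
  refine ⟨pmap P (Finsupp.mapRange.linearMap (mk1 (R := R) 3 0 LinearMap.id) φ), ?_⟩
  have key : P.A ∘ₗ P.A ∘ₗ pmap P ∘ₗ Finsupp.mapRange.linearMap (mk1 (R := R) 3 0 LinearMap.id)
      = pmap P ∘ₗ Finsupp.mapRange.linearMap (mk1 (R := R) 3 3 LinearMap.id) := by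
    apply Finsupp.lhom_ext
    intro x c
    simp only [LinearMap.comp_apply, Finsupp.mapRange.linearMap_apply,
      Finsupp.mapRange_single, pmap, Finsupp.lsum_single, theta_apply, mk1_apply]
    simp [mk1_apply]
  have key2 : Finsupp.mapRange.linearMap (mk1 3 3 (LinearMap.id (R := R))) φ = φ := by
    ext x r
    simp only [Finsupp.mapRange.linearMap_apply, Finsupp.mapRange_apply, mk1_apply]
    obtain ⟨h0, h1, h2⟩ := hc x
    fin_cases r <;> simp_all
  have hk := DFunLike.congr_fun key φ
  simp only [LinearMap.comp_apply] at hk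
  rw [hk, key2]
  have hs := DFunLike.congr_fun hsec y
  simpa using hs


lemma shiftDown_apply (k : Type) [CommRing k] (n : ℕ) (x : Fin (n+1) → k) (i : Fin (n+1)) :
    shiftDown k n x i = if h : i.val = 0 then 0
      else x ⟨i.val - 1, lt_of_le_of_lt (Nat.sub_le _ _) i.isLt⟩ := rfl


/-- The map `f` is a `Λ₁`-module endomorphism of `N_n`, and for
every `c ∈ k` the endomorphism `f - c·id` does not factor through a projective
`Λ₁`-module; in particular the stable endomorphism ring of `N_n` is not
isomorphic to `k`. -/
theorem Nn_stable_end_not_k (k : Type) [Field k] (n : ℕ) (hn : 1 ≤ n) :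
    f7 k n ∈ homSet1 (Nmod k n) (Nmod k n) ∧
    (∀ c : k, ¬ FactorsThroughProjective1 (Nmod k n) (f7 k n - c • LinearMap.id)) ∧
    ¬ StableEndIsoScalars1 (Nmod k n) := by
  have hmem : f7 k n ∈ homSet1 (Nmod k n) (Nmod k n) := by
    constructor
    · apply LinearMap.ext
      rintro ⟨t, s⟩
      refine Prod.ext ?_ ?_
      · simp [f7, mk1_apply]
      · funext r
        simp [f7, mk1_apply]
    · apply LinearMap.ext
      rintro ⟨t, s⟩
      refine Prod.ext ?_ ?_
      · simp [f7, mk1_apply]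
      · have key : ∀ u : Fin (n+1) → k,
            (mk1 0 ⟨n, Nat.lt_succ_self n⟩ (LinearMap.id : k →ₗ[k] k)) (shiftDown k n u)
              = shiftDown k n ((mk1 0 ⟨n, Nat.lt_succ_self n⟩ (LinearMap.id : k →ₗ[k] k)) u) := by
          intro u
          funext r
          have hr := r.isLt
          simp only [mk1_apply, shiftDown_apply, LinearMap.id_apply, Fin.ext_iff]
          split_ifs <;> first | rfl | omega | simp_all
        exact key t

  have hne : (⟨n, Nat.lt_succ_self n⟩ : Fin (n+1)) ≠ 0 := by
    simp only [ne_eq, Fin.ext_iff, Fin.val_zero]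
    omega
  have hpart2 : ∀ c : k,
      ¬ FactorsThroughProjective1 (Nmod k n) (f7 k n - c • LinearMap.id) := by
    intro c hfac
    obtain ⟨P, hP, g, hg, h, hh, heq⟩ := hfac
    set x0 : (Fin (n+1) → k) × (Fin (n+1) → k) := (0, Pi.single 0 1) with hx0
    have hAx0 : (Nmod k n).A x0 = 0 := by
      show ((0 : Fin (n+1) → k), (0 : Fin (n+1) → k)) = 0
      rfl
    have hDx0 : (Nmod k n).D x0 = 0 := by
      show ((0 : Fin (n+1) → k), shiftDown k n 0) = 0
      rw [map_zero]
      rfl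
    have hgA : P.A (g x0) = 0 := by
      have h1 := DFunLike.congr_fun hg.1 x0
      simp only [LinearMap.comp_apply, hAx0, map_zero] at h1
      exact h1.symm
    have hgD : P.D (g x0) = 0 := by
      have h1 := DFunLike.congr_fun hg.2 x0
      simp only [LinearMap.comp_apply, hDx0, map_zero] at h1
      exact h1.symm
    obtain ⟨z, hz⟩ := proj_socle hP hgA hgD
    have hAA : ∀ w : (Fin (n+1) → k) × (Fin (n+1) → k),
        (Nmod k n).A ((Nmod k n).A w) = 0 := by
      rintro ⟨t, s⟩
      show ((0 : Fin (n+1) → k), (0 : Fin (n+1) → k)) = 0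
      rfl
    have hval : (f7 k n - c • (LinearMap.id : (Nmod k n).V →ₗ[k] (Nmod k n).V)) x0
        = 0 := by
      rw [heq]
      simp only [LinearMap.comp_apply]
      rw [← hz]
      have e1 := DFunLike.congr_fun hh.1 (P.A z)
      have e2 := DFunLike.congr_fun hh.1 z
      simp only [LinearMap.comp_apply] at e1 e2
      rw [e1, e2, hAA]
    have hcontra := congrFun (congrArg Prod.snd hval) ⟨n, Nat.lt_succ_self n⟩
    simp only [hx0, f7, LinearMap.sub_apply, LinearMap.prodMap_apply, Prod.map_apply,
      LinearMap.smul_apply, LinearMap.id_apply, Prod.snd_sub, Prod.smul_snd,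
      Pi.sub_apply, Pi.smul_apply, mk1_apply, LinearMap.id_apply, if_pos rfl,
      Pi.single_eq_same, smul_eq_mul, Prod.snd_zero, Pi.zero_apply] at hcontra
    rw [Pi.single_eq_of_ne hne] at hcontra
    simp at hcontra
  refine ⟨hmem, hpart2, ?_⟩
  rintro ⟨h1, h2⟩
  obtain ⟨c, hc⟩ := h2 (f7 k n) hmem
  exact hpart2 c hc

end GBTAone
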